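/- Let $U$ be a principal Galois $\Gamma$-order, and let $U_- = \{X \in U : X(1_\Gamma) = 0\}$, where $X \mapsto X(1_\Gamma)$ denotes evaluation of $X = \sum_\mu l_\mu \mu$ at $1$, i.e., $X(1) = \sum_\mu l_\mu$. Then $U_-$ is a $\Gamma$-submodule of $U$ and $U = \Gamma \oplus U_-$ as $\Gamma$-modules. -/

import Mathlib

noncomputable section

/-- Left multiplication by `l` as an additive endomorphism of `L`. -/
def mulL {L : Type*} [Field L] (l : L) : AddMonoid.End L := AddMonoidHom.mulLeft l

/-- A ring automorphism viewed as an additive endomorphism. -/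
def autEnd {L : Type*} [Field L] (μ : L ≃+* L) : AddMonoid.End L :=
  (μ : L →+* L).toAddMonoidHom

/-- The subring of `L` of elements fixed by every member of `W`. -/
def fixedSubring {L : Type*} [Field L] (W : Subgroup (L ≃+* L)) : Subring L where
  carrier := {x | ∀ w ∈ W, w x = x}
  mul_mem' := by intro a b ha hb; intro w hw; simp [map_mul, ha w hw, hb w hw]
  one_mem' := by intro w hw; simp
  add_mem' := by intro a b ha hb; intro w hw; simp [map_add, ha w hw, hb w hw]
  zero_mem' := by intro w hw; simp
  neg_mem' := by intro a ha w hw; simp [map_neg, ha w hw]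

/-- A Galois ring setting `(Λ, 𝓜, W)`: a Noetherian integral domain `Λ` realized as a
subring of its fraction field `L`, a submonoid `𝓜` of automorphisms of `L` restricting
to automorphisms of `Λ`, and a finite group `W` of automorphisms of `Λ` acting on `𝓜`
by conjugation with finitely many orbits, with `𝓜` separating
(`𝓜 𝓜⁻¹ ∩ W = {1}`). -/
structure GaloisSetting (L : Type*) [Field L] where
  Λ : Subring L
  noeth : IsNoetherianRing Λ
  frac : ∀ x : L, ∃ a b : Λ, (b : L) ≠ 0 ∧ x = a / b
  M : Submonoid (L ≃+* L)
  W : Subgroup (L ≃+* L)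
  finW : Finite W
  hM : ∀ μ ∈ M, (∀ x ∈ Λ, μ x ∈ Λ) ∧ ∀ x ∈ Λ, μ.symm x ∈ Λ
  hW : ∀ w ∈ W, ∀ x ∈ Λ, w x ∈ Λ
  norm : ∀ w ∈ W, ∀ μ ∈ M, w * μ * w⁻¹ ∈ M
  orbits : ∃ T : Finset (L ≃+* L), ↑T ⊆ (M : Set (L ≃+* L)) ∧
    ∀ μ ∈ M, ∃ ν ∈ T, ∃ w ∈ W, μ = w * ν * w⁻¹
  separating : ∀ μ ∈ M, ∀ ν ∈ M, μ * ν⁻¹ ∈ W → μ = ν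

namespace GaloisSetting

variable {L : Type*} [Field L] (S : GaloisSetting L)

/-- `Γ = Λᵂ`, the invariants of `Λ` under `W`. -/
def Γ : Subring L := S.Λ ⊓ fixedSubring S.W

/-- `K = Lᵂ`, the invariants of `L` under `W` (the fraction field of `Γ`). -/
def K : Subring L := fixedSubring S.W

/-- The skew monoid ring `𝓛 = L * 𝓜`, realized concretely as the subring of additive
endomorphisms of `L` generated by left multiplications by elements of `L` and by the
automorphisms in `𝓜`; its elements are exactly the finite sums `Σ l_μ μ`. -/
def skewL : Subring (AddMonoid.End L) :=
  Subring.closure ({f | ∃ l : L, f = mulL l} ∪ {f | ∃ μ ∈ S.M, f = autEnd μ})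

/-- `𝓚 = 𝓛ᵂ`: the elements of the skew monoid ring fixed by conjugation by `W`. -/
def invK : Set (AddMonoid.End L) :=
  {X | X ∈ S.skewL ∧ ∀ w : L ≃+* L, w ∈ S.W → autEnd w * X * autEnd w.symm = X}

/-- `U` is a Galois `Γ`-ring in `𝓚 = (L * 𝓜)ᵂ`: `Λ` is a Noetherian `Γ`-module,
`Γ ⊆ U ⊆ 𝓚`, and `K U = 𝓚`. -/
structure IsGaloisRing (U : Subring (AddMonoid.End L)) : Prop where
  lambdaNoeth : ∀ N : AddSubgroup L, (N : Set L) ⊆ S.Λ →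
    (∀ γ ∈ S.Γ, ∀ x ∈ N, γ * x ∈ N) →
    ∃ s : Finset L, ↑s ⊆ (N : Set L) ∧ ∀ x ∈ N,
      x ∈ AddSubgroup.closure {y | ∃ γ ∈ S.Γ, ∃ a ∈ (s : Set L), y = γ * a}
  gammaSub : ∀ γ ∈ S.Γ, mulL γ ∈ U
  subInvK : ∀ X ∈ U, X ∈ S.invK
  KU : ∀ X ∈ S.invK,
    X ∈ AddSubgroup.closure {f | ∃ k ∈ S.K, ∃ u ∈ U, f = mulL k * u}

/-- `U` is a principal Galois `Γ`-order: a Galois `Γ`-ring whose elements, viewed as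
operators on `L`, preserve `Γ`. -/
structure IsPrincipalGaloisOrder (U : Subring (AddMonoid.End L))
    extends GaloisSetting.IsGaloisRing S U : Prop where
  princ : ∀ X ∈ U, ∀ γ : L, γ ∈ S.Γ → X γ ∈ S.Γ

end GaloisSetting

open GaloisSetting in
/-- Let `U` be a principal Galois `Γ`-order and
`U₋ = {X ∈ U : X(1) = 0}` (evaluation of operators at `1`).  Then `U₋` is a
`Γ`-submodule of `U` and `U = Γ ⊕ U₋` as `Γ`-modules. -/
theorem principalGaloisOrder_decomposition {L : Type*} [Field L] (S : GaloisSetting L)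
    (U : Subring (AddMonoid.End L)) (hU : S.IsPrincipalGaloisOrder U) :
    (∀ X ∈ U, ∀ Y ∈ U, X (1 : L) = 0 → Y (1 : L) = 0 →
        X + Y ∈ U ∧ (X + Y) (1 : L) = 0 ∧ -X ∈ U ∧ (-X) (1 : L) = 0) ∧
    (∀ γ ∈ S.Γ, ∀ Y ∈ U, Y (1 : L) = 0 → mulL γ * Y ∈ U ∧ (mulL γ * Y) (1 : L) = 0) ∧
    (∀ X ∈ U, ∃ γ ∈ S.Γ, ∃ Y ∈ U, Y (1 : L) = 0 ∧ X = mulL γ + Y) ∧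
    (∀ γ ∈ S.Γ, mulL γ ∈ U → (mulL γ : AddMonoid.End L) (1 : L) = 0 →
        mulL γ = (0 : AddMonoid.End L)) := by
  have h1 : (1 : L) ∈ S.Γ := one_mem _
  refine ⟨?_, ?_, ?_, ?_⟩
  · intro X hX Y hY hX1 hY1
    refine ⟨U.add_mem hX hY, ?_, U.neg_mem hX, ?_⟩
    · show X 1 + Y 1 = 0
      simp [hX1, hY1]
    · show -(X 1) = 0
      simp [hX1]
  · intro γ hγ Y hY hY1
    refine ⟨U.mul_mem (hU.gammaSub γ hγ) hY, ?_⟩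
    show mulL γ (Y 1) = 0
    simp [mulL, hY1]
    exact mul_zero γ
  · intro X hX
    have hXγ : X 1 ∈ S.Γ := hU.princ X hX 1 h1
    refine ⟨X 1, hXγ, X - mulL (X 1), U.sub_mem hX (hU.gammaSub _ hXγ), ?_, by abel⟩
    show X 1 - X 1 * 1 = 0
    ring
  · intro γ _ _ hγ1
    have hg1 : γ * 1 = 0 := hγ1
    have hg : γ = 0 := by simpa using hg1
    refine AddMonoidHom.ext fun x => ?_
    show γ * x = 0
    simp [hg]
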